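/- Let p_{X,Y} ∈ E[0,1]^2_n be a two-dimensional histogram density of resolution n whose weights w_{k_1,k_2} = w_{k_2} depend only on the second index, let p_X ∈ E[0,1]^1_n be its first marginal (with weights w_k), and let f be the piecewise linear function of the explicit construction with f#U = p_X. Define the transport map M: [0,1] → [0,1]^2 by M(x) = (x, f(g_s(x))). Then W(M#U, p_{X,Y}) ≤ 2√2/2^s. -/

import Mathlib

open MeasureTheory Matrix

/-- Uniform probability measure on the interval `[a, b]`. -/
noncomputable def uniformOnIcc (a b : ℝ) : Measure ℝ :=
  (ENNReal.ofReal (b - a))⁻¹ • volume.restrict (Set.Icc a b)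

/-- Wasserstein(-1) distance between two measures: the infimum of `∫ ‖x - y‖ dπ` over all
couplings `π`, i.e., measures on the product whose marginals are `μ` and `ν`. -/
noncomputable def wassersteinDist {E : Type*} [MeasurableSpace E] [NormedAddCommGroup E]
    (μ ν : Measure E) : ℝ :=
  ⨅ π : {π : Measure (E × E) // π.map Prod.fst = μ ∧ π.map Prod.snd = ν},
    ∫ p, ‖p.1 - p.2‖ ∂(π : Measure (E × E))

/-- The sawtooth function `g`: `g x = 2 x` for `0 ≤ x < 1/2`, `g x = 2 (1 - x)` for
`1/2 ≤ x ≤ 1`, and `g x = 0` outside `[0, 1]`. -/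
noncomputable def saw (x : ℝ) : ℝ :=
  if x < 0 then 0 else if x < 1/2 then 2 * x else if x ≤ 1 then 2 * (1 - x) else 0

/-- `sawIter s` is the `s`-fold composition `g_s = g ∘ g ∘ ⋯ ∘ g` of the sawtooth function
(with `sawIter 0 = id`, `sawIter 1 = g`). -/
noncomputable def sawIter : ℕ → ℝ → ℝ
  | 0, x => x
  | s + 1, x => saw (sawIter s x)

/-- The pdf of a two-dimensional histogram distribution of resolution `n` with weights `W`:
it equals `W k₁ k₂` on the square `[k₁/n, (k₁+1)/n) × [k₂/n, (k₂+1)/n)`. -/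
noncomputable def histPdf2 (n : ℕ) (W : ℕ → ℕ → ℝ) (y : EuclideanSpace ℝ (Fin 2)) : ℝ :=
  ∑ k₁ ∈ Finset.range n, ∑ k₂ ∈ Finset.range n,
    W k₁ k₂ * (Set.Ico ((k₁:ℝ)/n) (((k₁:ℝ)+1)/n)).indicator (fun _ => (1:ℝ)) (y 0)
      * (Set.Ico ((k₂:ℝ)/n) (((k₂:ℝ)+1)/n)).indicator (fun _ => (1:ℝ)) (y 1)

/-- The explicit piecewise linear function generating the histogram distribution of
resolution `n` (uniform tile size) with weights `v` from the uniform distribution: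
`f(x) = ∑_i a_i max(0, x - b_i)` with `a_0 = 1/v_0`, `a_i = 1/v_i - 1/v_{i-1}`,
`b_i = (1/n) ∑_{j<i} v_j`. -/
noncomputable def plf (n : ℕ) (v : ℕ → ℝ) (x : ℝ) : ℝ :=
  ∑ i ∈ Finset.range n,
    (if i = 0 then 1 / v 0 else 1 / v i - 1 / v (i-1)) *
      max 0 (x - (1/(n:ℝ)) * ∑ j ∈ Finset.range i, v j)

open Set

lemma lt11_saw : ∀ (s : ℕ) (j : ℕ), j < 2^s → ∀ t : ℝ, 0 ≤ t → t ≤ 1 →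
    sawIter s ((j + t)/2^s) = if Even j then t else 1 - t := by
  intro s
  induction s with
  | zero =>
    intro j hj t h0 h1
    interval_cases j
    simp [sawIter]
  | succ s ih =>
    intro j hj t h0 h1
    have hs2 : (2:ℝ)^(s+1) = 2^s * 2 := by rw [pow_succ]
    have h2s : (0:ℝ) < 2^s := by positivity
    rcases Nat.even_or_odd j with ⟨m, hm⟩ | ⟨m, hm⟩
    · -- j = m + m
      have hm' : m < 2^s := by omega
      have hx : ((j:ℝ) + t)/2^(s+1) = ((m:ℝ) + t/2)/2^s := by
        subst hm; push_cast; rw [hs2]; field_simp; ring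
      have key := ih m hm' (t/2) (by linarith) (by linarith)
      show saw (sawIter s _) = _
      rw [hx, key]
      have hje : Even j := ⟨m, hm⟩
      by_cases hme : Even m <;> simp only [hme, hje, if_true, if_false, if_pos, if_neg] <;>
        · unfold saw; split_ifs <;> linarith
    · -- j = 2m+1
      have hm' : m < 2^s := by omega
      have hx : ((j:ℝ) + t)/2^(s+1) = ((m:ℝ) + (1+t)/2)/2^s := by
        subst hm; push_cast; rw [hs2]; field_simp; ring
      have key := ih m hm' ((1+t)/2) (by linarith) (by linarith)
      show saw (sawIter s _) = _
      rw [hx, key]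
      have hjo : ¬ Even j := by simp [hm, parity_simps]
      by_cases hme : Even m <;> simp only [hme, hjo, if_true, if_false, if_pos, if_neg] <;>
        · unfold saw; split_ifs <;> linarith
lemma measurable_saw : Measurable saw := by
  unfold saw
  apply Measurable.ite (measurableSet_lt measurable_id measurable_const) measurable_const
  apply Measurable.ite (measurableSet_lt measurable_id measurable_const)
    (measurable_const.mul measurable_id)
  apply Measurable.ite (measurableSet_le measurable_id measurable_const)
    (measurable_const.mul (measurable_const.sub measurable_id)) measurable_const

lemma measurable_sawIter (s : ℕ) : Measurable (sawIter s) := by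
  induction s with
  | zero => exact measurable_id
  | succ s ih => exact measurable_saw.comp ih

lemma continuous_plf (n : ℕ) (v : ℕ → ℝ) : Continuous (plf n v) := by
  unfold plf
  exact continuous_finset_sum _ fun i _ =>
    (continuous_const.mul (continuous_const.max (continuous_id.sub continuous_const)))

-- affine pushforward of volume
lemma map_affine (a c : ℝ) (ha : a ≠ 0) :
    Measure.map (fun x => a * x + c) volume = ENNReal.ofReal |a⁻¹| • volume := by
  have h1 : (fun x : ℝ => a * x + c) = (fun x : ℝ => x + c) ∘ (fun x : ℝ => a * x) := rfl
  rw [h1, ← Measure.map_map (by exact measurable_id.add_const c) (measurable_const_mul a)]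
  rw [show (Measure.map (fun x : ℝ => a * x) volume) = ENNReal.ofReal |a⁻¹| • volume from
    Real.map_volume_mul_left ha, Measure.map_smul, map_add_right_eq_self]

lemma affine_embedding (a c : ℝ) (ha : a ≠ 0) :
    MeasurableEmbedding (fun x : ℝ => a * x + c) := by
  have : (fun x : ℝ => a * x + c) = ⇑((Homeomorph.mulLeft₀ a ha).trans (Homeomorph.addRight c)) := rfl
  rw [this]
  exact (Homeomorph.measurableEmbedding _)

lemma map_affine_restrict (a c : ℝ) (ha : a ≠ 0) (T : Set ℝ) :
    Measure.map (fun x => a * x + c) (volume.restrict ((fun x => a * x + c) ⁻¹' T))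
      = ENNReal.ofReal |a⁻¹| • volume.restrict T := by
  rw [← (affine_embedding a c ha).restrict_map, map_affine a c ha, Measure.restrict_smul]

-- decomposition of an interval into consecutive pieces
lemma restrict_sum_pieces (b : ℕ → ℝ) (m : ℕ) (hb : ∀ i < m, b i ≤ b (i+1)) :
    ∑ i ∈ Finset.range m, volume.restrict (Set.Ico (b i) (b (i+1)))
      = volume.restrict (Set.Ico (b 0) (b m)) := by
  induction m with
  | zero => simp
  | succ m ih =>
    have h0m : b 0 ≤ b m := by
      clear ih
      induction m with
      | zero => exact le_refl _
      | succ k ihk => exact le_trans (ihk (fun i hi => hb i (by omega))) (hb k (by omega))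
    rw [Finset.sum_range_succ, ih (fun i hi => hb i (by omega)),
      ← Set.Ico_union_Ico_eq_Ico h0m (hb m (by omega)),
      Measure.restrict_union (Set.Ico_disjoint_Ico_same) measurableSet_Ico]

-- bilinearity helpers for prod
lemma sfinite_finset_sum {ι : Type*} (s : Finset ι) (ν : ι → Measure ℝ) [∀ i, SFinite (ν i)] :
    SFinite (∑ i ∈ s, ν i) := by
  classical
  induction s using Finset.induction with
  | empty => simpa using inferInstanceAs (SFinite (0 : Measure ℝ))
  | insert _ _ h ih => rw [Finset.sum_insert h]; haveI := ih; infer_instance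

lemma prod_smul_right (μ ν : Measure ℝ) [SFinite μ] [SFinite ν] (c : ENNReal) :
    μ.prod (c • ν) = c • (μ.prod ν) := by
  ext s hs
  rw [Measure.smul_apply, Measure.prod_apply hs, Measure.prod_apply hs]
  simp only [Measure.smul_apply, smul_eq_mul]
  rw [← lintegral_const_mul c (measurable_measure_prodMk_left hs)]

lemma prod_finset_sum_right {ι : Type*} (μ : Measure ℝ) [SFinite μ] (s : Finset ι)
    (ν : ι → Measure ℝ) [∀ i, SFinite (ν i)] :
    μ.prod (∑ i ∈ s, ν i) = ∑ i ∈ s, μ.prod (ν i) := by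
  classical
  induction s using Finset.induction with
  | empty => simp
  | @insert a u h ih =>
    rw [Finset.sum_insert h, Finset.sum_insert h]
    haveI := sfinite_finset_sum u ν
    rw [Measure.prod_add, ih]

lemma map_finset_sum_meas {ι α β : Type*} [MeasurableSpace α] [MeasurableSpace β]
    {f : α → β} (hf : Measurable f) (s : Finset ι) (μ : ι → Measure α) :
    Measure.map f (∑ i ∈ s, μ i) = ∑ i ∈ s, Measure.map f (μ i) := by
  classical
  induction s using Finset.induction with
  | empty => simp [Measure.map_zero]
  | insert _ _ h ih => rw [Finset.sum_insert h, Finset.sum_insert h, Measure.map_add _ _ hf, ih]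
noncomputable def bfun (n : ℕ) (w : ℕ → ℝ) (i : ℕ) : ℝ :=
  (1/(n:ℝ)) * ∑ j ∈ Finset.range i, w j

lemma plf_def' (n : ℕ) (w : ℕ → ℝ) (x : ℝ) :
    plf n w x = ∑ i ∈ Finset.range n,
      (if i = 0 then 1 / w 0 else 1 / w i - 1 / w (i-1)) * max 0 (x - bfun n w i) := rfl

lemma bfun_zero (n : ℕ) (w : ℕ → ℝ) : bfun n w 0 = 0 := by simp [bfun]

lemma bfun_succ (n : ℕ) (w : ℕ → ℝ) (i : ℕ) :
    bfun n w (i+1) = bfun n w i + w i / n := by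
  simp [bfun, Finset.sum_range_succ]; ring

lemma bfun_mono (n : ℕ) (w : ℕ → ℝ) (hw : ∀ k < n, 0 < w k) {p q : ℕ}
    (hpq : p ≤ q) (hq : q ≤ n) : bfun n w p ≤ bfun n w q := by
  have hn0 : (0:ℝ) ≤ (n:ℝ)⁻¹ := by positivity
  unfold bfun
  rw [one_div]
  apply mul_le_mul_of_nonneg_left _ hn0
  apply Finset.sum_le_sum_of_subset_of_nonneg (Finset.range_subset_range.2 hpq)
  intro k hk _
  exact (hw k (lt_of_lt_of_le (Finset.mem_range.1 hk) hq)).le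

lemma plf_sum_formula (n : ℕ) (w : ℕ → ℝ) (hw : ∀ k < n, 0 < w k) (hn : 0 < n) :
    ∀ i < n, ∀ x : ℝ,
      ∑ i' ∈ Finset.range (i+1),
        (if i' = 0 then 1 / w 0 else 1 / w i' - 1 / w (i'-1)) * (x - bfun n w i')
      = (i:ℝ)/n + (x - bfun n w i)/(w i) := by
  intro i
  induction i with
  | zero =>
    intro _ x
    simp [bfun_zero]
    ring
  | succ i ih =>
    intro hi x
    have hwi : w i ≠ 0 := (hw i (by omega)).ne'
    rw [Finset.sum_range_succ, ih (by omega) x]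
    have hb : bfun n w (i+1) = bfun n w i + w i / n := bfun_succ n w i
    rw [hb]
    have hn' : (n:ℝ) ≠ 0 := Nat.cast_ne_zero.2 hn.ne'
    rw [if_neg (Nat.succ_ne_zero i)]
    simp only [Nat.add_sub_cancel]
    push_cast
    have key : (1/(w i)) * (x - (bfun n w i + w i / (n:ℝ))) = (x - bfun n w i)/(w i) - 1/(n:ℝ) := by
      field_simp
      ring
    linear_combination key + (2/(n:ℝ)) * mul_inv_cancel₀ hwi

lemma plf_eq_on_piece (n : ℕ) (w : ℕ → ℝ) (hn : 0 < n) (hw : ∀ k < n, 0 < w k)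
    (i : ℕ) (hi : i < n) (x : ℝ) (hx1 : bfun n w i ≤ x) (hx2 : x ≤ bfun n w (i+1)) :
    plf n w x = (i:ℝ)/n + (x - bfun n w i)/(w i) := by
  rw [plf_def', ← plf_sum_formula n w hw hn i hi x]
  rw [Finset.range_eq_Ico, ← Finset.sum_Ico_consecutive _ (Nat.zero_le (i+1)) hi,
    ← Finset.range_eq_Ico]
  have h2 : ∑ i' ∈ Finset.Ico (i+1) n,
      (if i' = 0 then 1 / w 0 else 1 / w i' - 1 / w (i'-1)) * max 0 (x - bfun n w i') = 0 := by
    apply Finset.sum_eq_zero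
    intro k hk
    rw [Finset.mem_Ico] at hk
    have : x - bfun n w k ≤ 0 := by
      have := bfun_mono n w hw (hk.1) (le_of_lt hk.2)
      linarith
    rw [max_eq_left this, mul_zero]
  rw [h2, add_zero]
  apply Finset.sum_congr rfl
  intro k hk
  rw [Finset.mem_range] at hk
  have : 0 ≤ x - bfun n w k := by
    have := bfun_mono n w hw (Nat.le_of_lt_succ hk) (le_of_lt hi)
    linarith
  rw [max_eq_right this]
lemma map_plf (n : ℕ) (hn : 0 < n) (w : ℕ → ℝ) (hw : ∀ k < n, 0 < w k)
    (hsum : ∑ k ∈ Finset.range n, w k = (n:ℝ)) :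
    Measure.map (plf n w) (volume.restrict (Set.Icc 0 1)) =
      ∑ k ∈ Finset.range n,
        ENNReal.ofReal (w k) • volume.restrict (Set.Ico ((k:ℝ)/n) (((k:ℝ)+1)/n)) := by
  have hn' : (n:ℝ) ≠ 0 := Nat.cast_ne_zero.2 hn.ne'
  have hb0 : bfun n w 0 = 0 := bfun_zero n w
  have hbn : bfun n w n = 1 := by
    unfold bfun; rw [hsum]; field_simp
  have hU : volume.restrict (Set.Icc (0:ℝ) 1)
      = ∑ i ∈ Finset.range n, volume.restrict (Set.Ico (bfun n w i) (bfun n w (i+1))) := by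
    rw [restrict_sum_pieces (bfun n w) n
        (fun i hi => by
          rw [bfun_succ]
          have h1 : 0 < w i / n := div_pos (hw i hi) (by exact_mod_cast hn)
          linarith), hb0, hbn]
    exact (Measure.restrict_congr_set Ico_ae_eq_Icc).symm
  rw [hU, map_finset_sum_meas (continuous_plf n w).measurable]
  apply Finset.sum_congr rfl
  intro i hi
  rw [Finset.mem_range] at hi
  have hwi : 0 < w i := hw i hi
  set c : ℝ := (i:ℝ)/n - bfun n w i / w i with hc
  set a : ℝ := 1 / w i with ha
  have ha0 : a ≠ 0 := by rw [ha]; exact one_div_ne_zero hwi.ne' 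
  -- plf agrees a.e. with the affine map on the piece
  have hcong : Measure.map (plf n w) (volume.restrict (Set.Ico (bfun n w i) (bfun n w (i+1))))
      = Measure.map (fun x => a * x + c) (volume.restrict (Set.Ico (bfun n w i) (bfun n w (i+1)))) := by
    apply Measure.map_congr
    filter_upwards [ae_restrict_mem measurableSet_Ico] with x hx
    rw [plf_eq_on_piece n w hn hw i hi x hx.1 hx.2.le, ha, hc]
    ring
  have hpre : (fun x : ℝ => a * x + c) ⁻¹' Set.Ico ((i:ℝ)/n) (((i:ℝ)+1)/n)
      = Set.Ico (bfun n w i) (bfun n w (i+1)) := by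
    have h1 : (fun x : ℝ => a * x + c) = (fun x : ℝ => x + c) ∘ (fun x : ℝ => a * x) := rfl
    rw [h1, Set.preimage_comp, Set.preimage_add_const_Ico,
      Set.preimage_const_mul_Ico₀ _ _ (by rw [ha]; positivity)]
    have e1 : ((i:ℝ)/n - c)/a = bfun n w i := by rw [hc, ha]; field_simp; ring
    have e2 : (((i:ℝ)+1)/n - c)/a = bfun n w (i+1) := by
      rw [hc, ha, bfun_succ]; field_simp; ring
    rw [e1, e2]
  have := map_affine_restrict a c ha0 (Set.Ico ((i:ℝ)/n) (((i:ℝ)+1)/n))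
  rw [hpre] at this
  rw [hcong, this, ha]
  congr 1
  rw [one_div, inv_inv, abs_of_pos hwi]
noncomputable def jfl (N : ℕ) (u : ℝ) : ℕ := min ⌊(N:ℝ) * u⌋₊ (N - 1)

noncomputable def Xmap (N : ℕ) (p : ℝ × ℝ) : ℝ :=
  ((jfl N p.2 : ℝ) + if Even (jfl N p.2) then p.1 else 1 - p.1) / N

lemma measurable_jfl (N : ℕ) : Measurable (jfl N) :=
  (Nat.measurable_floor.comp (measurable_const_mul _)).min measurable_const

lemma measurable_Xmap (N : ℕ) : Measurable (Xmap N) := by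
  unfold Xmap
  apply Measurable.div_const
  apply Measurable.add
  · exact measurable_from_nat.comp ((measurable_jfl N).comp measurable_snd)
  · exact Measurable.ite
      (((measurable_jfl N).comp measurable_snd) (MeasurableSet.of_discrete (s := {k : ℕ | Even k})))
      measurable_fst (measurable_const.sub measurable_fst)

lemma jfl_lt (N : ℕ) (hN : 0 < N) (u : ℝ) : jfl N u < N := by
  unfold jfl; omega

lemma jfl_eq (N : ℕ) (hN : 0 < N) (j : ℕ) (hj : j < N) (u : ℝ)
    (h1 : (j:ℝ)/N ≤ u) (h2 : u < ((j:ℝ)+1)/N) : jfl N u = j := by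
  have hN' : (0:ℝ) < N := by exact_mod_cast hN
  have hu0 : 0 ≤ u := le_trans (by positivity) h1
  have hfl : ⌊(N:ℝ) * u⌋₊ = j := by
    rw [Nat.floor_eq_iff (by positivity)]
    rw [div_le_iff₀ hN'] at h1
    rw [lt_div_iff₀ hN'] at h2
    constructor <;> [linarith; linarith]
  unfold jfl
  rw [hfl]
  omega

lemma jfl_mem (N : ℕ) (hN : 0 < N) (u : ℝ) (h0 : 0 ≤ u) (h1 : u ≤ 1) :
    ((jfl N u : ℝ))/N ≤ u ∧ u ≤ ((jfl N u : ℝ)+1)/N := by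
  have hN' : (0:ℝ) < N := by exact_mod_cast hN
  rcases lt_or_eq_of_le h1 with hu | hu
  · have hflt : ⌊(N:ℝ) * u⌋₊ < N := by
      rw [Nat.floor_lt (by positivity)]
      calc (N:ℝ) * u < N * 1 := by exact mul_lt_mul_of_pos_left hu hN'
        _ = N := by ring
    have hje : jfl N u = ⌊(N:ℝ) * u⌋₊ := by unfold jfl; omega
    rw [hje]
    constructor
    · rw [div_le_iff₀ hN']
      calc (⌊(N:ℝ) * u⌋₊ : ℝ) ≤ N * u := Nat.floor_le (by positivity)
        _ = u * N := by ring
    · rw [le_div_iff₀ hN']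
      have := Nat.lt_floor_add_one ((N:ℝ) * u)
      calc u * N = N * u := by ring
        _ ≤ (⌊(N:ℝ) * u⌋₊ : ℝ) + 1 := this.le
  · subst hu
    have : jfl N 1 = N - 1 := by
      unfold jfl
      have : ⌊(N:ℝ) * 1⌋₊ = N := by rw [mul_one, Nat.floor_natCast]
      omega
    rw [this]
    have hc : ((N - 1 : ℕ) : ℝ) = (N:ℝ) - 1 := by
      rw [Nat.cast_sub hN]; norm_num
    rw [hc]
    constructor
    · rw [div_le_one hN']; linarith
    · rw [le_div_iff₀ hN']; ring_nf; norm_num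

lemma abs_Xmap_sub (N : ℕ) (hN : 0 < N) (p : ℝ × ℝ)
    (ht0 : 0 ≤ p.1) (ht1 : p.1 ≤ 1) (hu0 : 0 ≤ p.2) (hu1 : p.2 ≤ 1) :
    |Xmap N p - p.2| ≤ 1/N := by
  have hN' : (0:ℝ) < N := by exact_mod_cast hN
  obtain ⟨ha, hb⟩ := jfl_mem N hN p.2 hu0 hu1
  set j := jfl N p.2 with hj
  set r : ℝ := if Even j then p.1 else 1 - p.1 with hr
  have hr0 : 0 ≤ r := by rw [hr]; split_ifs <;> linarith
  have hr1 : r ≤ 1 := by rw [hr]; split_ifs <;> linarith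
  have hXdef : Xmap N p = ((j:ℝ) + r)/N := rfl
  have hx1 : (j:ℝ)/N ≤ ((j:ℝ)+r)/N := by gcongr <;> linarith
  have hx2 : ((j:ℝ)+r)/N ≤ ((j:ℝ)+1)/N := by gcongr
  have key : ((j:ℝ)+1)/N = (j:ℝ)/N + 1/N := by ring
  rw [hXdef, abs_le]
  constructor <;> linarith

lemma sawIter_Xmap (s : ℕ) (p : ℝ × ℝ) (h0 : 0 ≤ p.1) (h1 : p.1 ≤ 1) :
    sawIter s (Xmap (2^s) p) = p.1 := by
  have hj : jfl (2^s) p.2 < 2^s := jfl_lt (2^s) (Nat.pow_pos (by norm_num)) p.2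
  by_cases he : Even (jfl (2^s) p.2)
  · have : Xmap (2^s) p = ((jfl (2^s) p.2 : ℝ) + p.1)/2^s := by
      unfold Xmap; rw [if_pos he]; norm_num
    rw [this, lt11_saw s _ hj p.1 h0 h1, if_pos he]
  · have : Xmap (2^s) p = ((jfl (2^s) p.2 : ℝ) + (1 - p.1))/2^s := by
      unfold Xmap; rw [if_neg he]; norm_num
    rw [this, lt11_saw s _ hj (1 - p.1) (by linarith) (by linarith), if_neg he]
    ring

lemma map_Xmap (N : ℕ) (hN : 0 < N) :
    Measure.map (Xmap N)
        ((volume.restrict (Set.Icc (0:ℝ) 1)).prod (volume.restrict (Set.Icc (0:ℝ) 1)))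
      = volume.restrict (Set.Icc (0:ℝ) 1) := by
  have hN' : (0:ℝ) < N := by exact_mod_cast hN
  have hU2 : volume.restrict (Set.Icc (0:ℝ) 1)
      = ∑ j ∈ Finset.range N, volume.restrict (Set.Ico ((j:ℝ)/N) (((j:ℝ)+1)/N)) := by
    have := restrict_sum_pieces (fun j : ℕ => (j:ℝ)/N) N
      (fun i _ => by push_cast; gcongr <;> linarith)
    simp only [Nat.cast_zero, zero_div] at this
    push_cast at this
    rw [this]
    have hNN : ((N:ℝ))/N = 1 := by field_simp
    rw [hNN]
    · rw [Measure.restrict_congr_set Ico_ae_eq_Icc]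
  conv_lhs => rw [show (volume.restrict (Set.Icc (0:ℝ) 1)).prod (volume.restrict (Set.Icc (0:ℝ) 1))
      = (volume.restrict (Set.Icc (0:ℝ) 1)).prod
          (∑ j ∈ Finset.range N, volume.restrict (Set.Ico ((j:ℝ)/N) (((j:ℝ)+1)/N))) from by rw [← hU2]]
  rw [prod_finset_sum_right, map_finset_sum_meas (measurable_Xmap N)]
  conv_rhs => rw [hU2]
  apply Finset.sum_congr rfl
  intro j hj
  rw [Finset.mem_range] at hj
  -- on this piece, Xmap agrees with a map depending only on the first coordinate
  set Ij := Set.Ico ((j:ℝ)/N) (((j:ℝ)+1)/N) with hIj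
  set gj : ℝ → ℝ := fun t => ((j:ℝ) + if Even j then t else 1 - t)/N with hgj
  have hcong : Measure.map (Xmap N) ((volume.restrict (Set.Icc (0:ℝ) 1)).prod (volume.restrict Ij))
      = Measure.map (gj ∘ Prod.fst) ((volume.restrict (Set.Icc (0:ℝ) 1)).prod (volume.restrict Ij)) := by
    apply Measure.map_congr
    rw [Measure.prod_restrict]
    filter_upwards [ae_restrict_mem ((measurableSet_Icc).prod measurableSet_Ico)] with p hp
    have hp2 : p.2 ∈ Ij := hp.2
    rw [hIj, Set.mem_Ico] at hp2
    have : jfl N p.2 = j := jfl_eq N hN j hj p.2 hp2.1 hp2.2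
    show Xmap N p = gj p.1
    unfold Xmap
    rw [this, hgj]
  rw [hcong, ← Measure.map_map ?hgm measurable_fst]
  case hgm =>
    rw [hgj]
    apply Measurable.div_const
    apply measurable_const.add
    by_cases he : Even j
    · simp only [he, ↓reduceIte]; fun_prop
    · simp only [he, ↓reduceIte]; fun_prop
  rw [Measure.map_fst_prod]
  have hIvol : (volume.restrict Ij) Set.univ = ENNReal.ofReal (1/N) := by
    rw [Measure.restrict_apply_univ, hIj, Real.volume_Ico]
    congr 1
    field_simp
    ring
  rw [hIvol, Measure.map_smul]
  -- now compute map gj U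
  have hmap : Measure.map gj (volume.restrict (Set.Icc (0:ℝ) 1))
      = ENNReal.ofReal N • volume.restrict Ij := by
    by_cases he : Even j
    · have hfun : gj = fun t => (1/(N:ℝ)) * t + (j:ℝ)/N := by
        funext t; rw [hgj]; simp only [if_pos he]; field_simp; ring
      have hpre : (fun t : ℝ => (1/(N:ℝ)) * t + (j:ℝ)/N) ⁻¹' Ij = Set.Ico (0:ℝ) 1 := by
        have h1 : (fun t : ℝ => (1/(N:ℝ)) * t + (j:ℝ)/N)
            = (fun x : ℝ => x + (j:ℝ)/N) ∘ (fun x : ℝ => (1/(N:ℝ)) * x) := rfl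
        rw [hIj, h1, Set.preimage_comp, Set.preimage_add_const_Ico,
          Set.preimage_const_mul_Ico₀ _ _ (by positivity)]
        have e1 : ((j:ℝ)/N - (j:ℝ)/N)/(1/(N:ℝ)) = 0 := by simp
        have e2 : (((j:ℝ)+1)/N - (j:ℝ)/N)/(1/(N:ℝ)) = 1 := by field_simp; ring
        rw [e1, e2]
      have hrestr : volume.restrict (Set.Icc (0:ℝ) 1)
          = volume.restrict ((fun t : ℝ => (1/(N:ℝ)) * t + (j:ℝ)/N) ⁻¹' Ij) := by
        rw [hpre, Measure.restrict_congr_set Ico_ae_eq_Icc]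
      rw [hfun, hrestr, map_affine_restrict _ _ (by positivity) Ij]
      congr 1
      rw [one_div, inv_inv, abs_of_pos hN']
    · have hfun : gj = fun t => (-(1/(N:ℝ))) * t + ((j:ℝ)+1)/N := by
        funext t; rw [hgj]; simp only [if_neg he]; field_simp; ring
      have hpre : (fun t : ℝ => (-(1/(N:ℝ))) * t + ((j:ℝ)+1)/N) ⁻¹' Ij = Set.Ioc (0:ℝ) 1 := by
        have h1 : (fun t : ℝ => (-(1/(N:ℝ))) * t + ((j:ℝ)+1)/N)
            = (fun x : ℝ => x + ((j:ℝ)+1)/N) ∘ (fun x : ℝ => (-(1/(N:ℝ))) * x) := rfl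
        rw [hIj, h1, Set.preimage_comp, Set.preimage_add_const_Ico,
          Set.preimage_const_mul_Ico_of_neg _ _ (by simp; positivity)]
        have e1 : (((j:ℝ)+1)/N - ((j:ℝ)+1)/N)/(-(1/(N:ℝ))) = 0 := by simp
        have e2 : ((j:ℝ)/N - ((j:ℝ)+1)/N)/(-(1/(N:ℝ))) = 1 := by
          rw [div_eq_iff (by simp; positivity)]
          field_simp
          ring
        rw [e1, e2]
      have hrestr : volume.restrict (Set.Icc (0:ℝ) 1)
          = volume.restrict ((fun t : ℝ => (-(1/(N:ℝ))) * t + ((j:ℝ)+1)/N) ⁻¹' Ij) := by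
        rw [hpre, Measure.restrict_congr_set Ioc_ae_eq_Icc]
      rw [hfun, hrestr, map_affine_restrict _ _ (by simp; positivity) Ij]
      congr 1
      rw [show (-(1/(N:ℝ)))⁻¹ = -(N:ℝ) from by field_simp, abs_neg, abs_of_pos hN']
  rw [hmap, smul_smul, ← ENNReal.ofReal_mul (by positivity)]
  rw [show (1/(N:ℝ)) * N = 1 from by field_simp, ENNReal.ofReal_one, one_smul]

noncomputable def E2 : (ℝ × ℝ) ≃ᵐ EuclideanSpace ℝ (Fin 2) :=
  MeasurableEquiv.finTwoArrow.symm.trans (MeasurableEquiv.toLp 2 (Fin 2 → ℝ))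

lemma E2_apply (p : ℝ × ℝ) : E2 p = ![p.1, p.2] := rfl

lemma E2_apply0 (p : ℝ × ℝ) : (E2 p) 0 = p.1 := rfl
lemma E2_apply1 (p : ℝ × ℝ) : (E2 p) 1 = p.2 := rfl

lemma measurePreserving_E2 : MeasurePreserving E2 (volume.prod volume) volume := by
  have h1 : MeasurePreserving (MeasurableEquiv.finTwoArrow.symm : (ℝ × ℝ) ≃ᵐ (Fin 2 → ℝ))
      (volume.prod volume) volume := by
    have := (MeasureTheory.volume_preserving_finTwoArrow ℝ).symm MeasurableEquiv.finTwoArrow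
    rwa [← Measure.volume_eq_prod]
  have h2 : MeasurePreserving (MeasurableEquiv.toLp 2 (Fin 2 → ℝ)) volume volume :=
    (EuclideanSpace.volume_preserving_symm_measurableEquiv_toLp (Fin 2)).symm _
  exact h2.comp h1

lemma withDensity_map_equiv {α β : Type*} [MeasurableSpace α] [MeasurableSpace β]
    (e : α ≃ᵐ β) (μ : Measure α) (f : β → ENNReal) (hf : Measurable f) :
    (Measure.map e μ).withDensity f = Measure.map e (μ.withDensity (fun a => f (e a))) := by
  ext s hs
  rw [withDensity_apply _ hs, Measure.map_apply e.measurable hs,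
    withDensity_apply _ (e.measurable hs), setLIntegral_map hs hf e.measurable]

lemma withDensity_finset_sum {α : Type*} [MeasurableSpace α] (μ : Measure α) {ι : Type*}
    (s : Finset ι) (f : ι → α → ENNReal) (hf : ∀ i, Measurable (f i)) :
    μ.withDensity (fun a => ∑ i ∈ s, f i a) = ∑ i ∈ s, μ.withDensity (f i) := by
  classical
  induction s using Finset.induction with
  | empty => simp
  | @insert a u h ih =>
    simp only [Finset.sum_insert h]
    rw [← ih, ← withDensity_add_right _ (by exact Finset.measurable_sum u fun i _ => hf i)]
    rfl

lemma prod_finset_sum_left {ι : Type*} (ν : Measure ℝ) [SFinite ν] (s : Finset ι)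
    (μ : ι → Measure ℝ) [∀ i, SFinite (μ i)] :
    (∑ i ∈ s, μ i).prod ν = ∑ i ∈ s, (μ i).prod ν := by
  classical
  induction s using Finset.induction with
  | empty => simp [Measure.zero_prod]
  | @insert a u h ih =>
    rw [Finset.sum_insert h, Finset.sum_insert h]
    haveI := sfinite_finset_sum u μ
    rw [Measure.add_prod, ih]

lemma sum_restrict_unit (N : ℕ) (hN : 0 < N) :
    volume.restrict (Set.Icc (0:ℝ) 1)
      = ∑ j ∈ Finset.range N, volume.restrict (Set.Ico ((j:ℝ)/N) (((j:ℝ)+1)/N)) := by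
  have hN' : (0:ℝ) < N := by exact_mod_cast hN
  have := restrict_sum_pieces (fun j : ℕ => (j:ℝ)/N) N
    (fun i _ => by push_cast; gcongr <;> linarith)
  simp only [Nat.cast_zero, zero_div] at this
  push_cast at this
  rw [this]
  have hNN : ((N:ℝ))/N = 1 := by field_simp
  rw [hNN]
  rw [Measure.restrict_congr_set Ico_ae_eq_Icc]

lemma hist_density_eq (n : ℕ) (hn : 0 < n) (w : ℕ → ℝ) (hw : ∀ k < n, 0 < w k) :
    (volume : Measure (ℝ × ℝ)).withDensity
        (fun p => ENNReal.ofReal (histPdf2 n (fun _ k₂ => w k₂) (E2 p)))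
      = (volume.restrict (Set.Icc (0:ℝ) 1)).prod
          (∑ k ∈ Finset.range n,
            ENNReal.ofReal (w k) • volume.restrict (Set.Ico ((k:ℝ)/n) (((k:ℝ)+1)/n))) := by
  classical
  have hpt : (fun p : ℝ × ℝ => ENNReal.ofReal (histPdf2 n (fun _ k₂ => w k₂) (E2 p)))
      = fun p : ℝ × ℝ => ∑ k₁ ∈ Finset.range n, ∑ k₂ ∈ Finset.range n,
          ENNReal.ofReal (w k₂) *
            ((Set.Ico ((k₁:ℝ)/n) (((k₁:ℝ)+1)/n) ×ˢ Set.Ico ((k₂:ℝ)/n) (((k₂:ℝ)+1)/n)).indicator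
              (fun _ => (1:ENNReal)) p) := by
    funext p
    unfold histPdf2
    rw [E2_apply0, E2_apply1]
    rw [ENNReal.ofReal_sum_of_nonneg (fun k₁ hk₁ => Finset.sum_nonneg (fun k₂ hk₂ => by
      have := (hw k₂ (Finset.mem_range.1 hk₂)).le
      have h1 : (0:ℝ) ≤ (Set.Ico ((k₁:ℝ)/n) (((k₁:ℝ)+1)/n)).indicator (fun _ => (1:ℝ)) p.1 :=
        Set.indicator_nonneg (fun _ _ => by norm_num) _
      have h2 : (0:ℝ) ≤ (Set.Ico ((k₂:ℝ)/n) (((k₂:ℝ)+1)/n)).indicator (fun _ => (1:ℝ)) p.2 :=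
        Set.indicator_nonneg (fun _ _ => by norm_num) _
      positivity))]
    apply Finset.sum_congr rfl
    intro k₁ _
    rw [ENNReal.ofReal_sum_of_nonneg (fun k₂ hk₂ => by
      have := (hw k₂ (Finset.mem_range.1 hk₂)).le
      have h1 : (0:ℝ) ≤ (Set.Ico ((k₁:ℝ)/n) (((k₁:ℝ)+1)/n)).indicator (fun _ => (1:ℝ)) p.1 :=
        Set.indicator_nonneg (fun _ _ => by norm_num) _
      have h2 : (0:ℝ) ≤ (Set.Ico ((k₂:ℝ)/n) (((k₂:ℝ)+1)/n)).indicator (fun _ => (1:ℝ)) p.2 :=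
        Set.indicator_nonneg (fun _ _ => by norm_num) _
      positivity)]
    apply Finset.sum_congr rfl
    intro k₂ hk₂
    have hwk := (hw k₂ (Finset.mem_range.1 hk₂)).le
    by_cases h1 : p.1 ∈ Set.Ico ((k₁:ℝ)/n) (((k₁:ℝ)+1)/n) <;>
      by_cases h2 : p.2 ∈ Set.Ico ((k₂:ℝ)/n) (((k₂:ℝ)+1)/n) <;>
      simp [Set.indicator, h1, h2, Set.mem_prod, ENNReal.ofReal_mul, hwk]
  rw [hpt]
  have hmeas : ∀ k₁ k₂ : ℕ, Measurable fun p : ℝ × ℝ =>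
      ENNReal.ofReal (w k₂) *
        ((Set.Ico ((k₁:ℝ)/n) (((k₁:ℝ)+1)/n) ×ˢ Set.Ico ((k₂:ℝ)/n) (((k₂:ℝ)+1)/n)).indicator
          (fun _ => (1:ENNReal)) p) := by
    intro k₁ k₂
    exact measurable_const.mul
      (Measurable.indicator measurable_const (measurableSet_Ico.prod measurableSet_Ico))
  rw [withDensity_finset_sum _ _ _ (fun k₁ => Finset.measurable_sum _ (fun k₂ _ => hmeas k₁ k₂))]
  have hterm : ∀ k₁ k₂ : ℕ,
      (volume : Measure (ℝ × ℝ)).withDensity (fun p =>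
        ENNReal.ofReal (w k₂) *
          ((Set.Ico ((k₁:ℝ)/n) (((k₁:ℝ)+1)/n) ×ˢ Set.Ico ((k₂:ℝ)/n) (((k₂:ℝ)+1)/n)).indicator
            (fun _ => (1:ENNReal)) p))
      = ENNReal.ofReal (w k₂) •
          ((volume.restrict (Set.Ico ((k₁:ℝ)/n) (((k₁:ℝ)+1)/n))).prod
            (volume.restrict (Set.Ico ((k₂:ℝ)/n) (((k₂:ℝ)+1)/n)))) := by
    intro k₁ k₂
    have hfeq : (fun p : ℝ × ℝ =>
        ENNReal.ofReal (w k₂) *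
          ((Set.Ico ((k₁:ℝ)/n) (((k₁:ℝ)+1)/n) ×ˢ Set.Ico ((k₂:ℝ)/n) (((k₂:ℝ)+1)/n)).indicator
            (fun _ => (1:ENNReal)) p))
        = (Set.Ico ((k₁:ℝ)/n) (((k₁:ℝ)+1)/n) ×ˢ Set.Ico ((k₂:ℝ)/n) (((k₂:ℝ)+1)/n)).indicator
            (fun _ => ENNReal.ofReal (w k₂)) := by
      funext p
      by_cases h : p ∈ Set.Ico ((k₁:ℝ)/n) (((k₁:ℝ)+1)/n) ×ˢ Set.Ico ((k₂:ℝ)/n) (((k₂:ℝ)+1)/n) <;>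
        simp [h]
    rw [hfeq, withDensity_indicator (measurableSet_Ico.prod measurableSet_Ico), withDensity_const,
      Measure.volume_eq_prod, Measure.prod_restrict]
  have hL : ∀ k₁ : ℕ, (volume : Measure (ℝ × ℝ)).withDensity (fun p =>
      ∑ k₂ ∈ Finset.range n,
        ENNReal.ofReal (w k₂) *
          ((Set.Ico ((k₁:ℝ)/n) (((k₁:ℝ)+1)/n) ×ˢ Set.Ico ((k₂:ℝ)/n) (((k₂:ℝ)+1)/n)).indicator
            (fun _ => (1:ENNReal)) p))
      = ∑ k₂ ∈ Finset.range n, ENNReal.ofReal (w k₂) •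
          ((volume.restrict (Set.Ico ((k₁:ℝ)/n) (((k₁:ℝ)+1)/n))).prod
            (volume.restrict (Set.Ico ((k₂:ℝ)/n) (((k₂:ℝ)+1)/n)))) := by
    intro k₁
    rw [withDensity_finset_sum _ _ _ (fun k₂ => hmeas k₁ k₂)]
    exact Finset.sum_congr rfl (fun k₂ _ => hterm k₁ k₂)
  rw [Finset.sum_congr rfl (fun k₁ _ => hL k₁)]
  haveI : SFinite (∑ k ∈ Finset.range n,
      ENNReal.ofReal (w k) • volume.restrict (Set.Ico ((k:ℝ)/n) (((k:ℝ)+1)/n))) :=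
    sfinite_finset_sum _ _
  rw [sum_restrict_unit n hn, prod_finset_sum_left]
  apply Finset.sum_congr rfl
  intro k₁ _
  rw [prod_finset_sum_right]
  apply Finset.sum_congr rfl
  intro k₂ _
  rw [prod_smul_right]

/-- Let `p_{X,Y}` be a two-dimensional histogram density of resolution `n`
whose weights `w_{k₁,k₂} = w_{k₂}` depend only on the second index, and let `f = plf n w` be
the explicit piecewise linear function generating the corresponding one-dimensional marginal
(with weights `w_k`). Then the transport map `M(x) = (x, f(g_s(x)))` satisfies
`W(M # U, p_{X,Y}) ≤ 2√2/2^s`. -/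
theorem linewise_transport (n s : ℕ) (hn : 0 < n) (hs : 1 ≤ s)
    (w : ℕ → ℝ) (hw : ∀ k < n, 0 < w k) (hsum : ∑ k ∈ Finset.range n, w k = (n:ℝ)) :
    wassersteinDist
      (Measure.map (fun x : ℝ =>
          (show EuclideanSpace ℝ (Fin 2) from WithLp.toLp 2 ![x, plf n w (sawIter s x)]))
        (uniformOnIcc 0 1))
      (volume.withDensity fun y => ENNReal.ofReal (histPdf2 n (fun _ k₂ => w k₂) y))
      ≤ 2 * Real.sqrt 2 / 2^s := by
  classical
  set N : ℕ := 2^s with hNdef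
  have hN : 0 < N := by positivity
  have hN' : (0:ℝ) < N := by exact_mod_cast hN
  have hU : uniformOnIcc 0 1 = volume.restrict (Set.Icc (0:ℝ) 1) := by
    unfold uniformOnIcc; norm_num
  set U : Measure ℝ := volume.restrict (Set.Icc (0:ℝ) 1) with hUdef
  haveI hUP : IsProbabilityMeasure U := by
    constructor
    rw [hUdef, Measure.restrict_apply_univ, Real.volume_Icc]
    norm_num
  have hf : Measurable (plf n w) := (continuous_plf n w).measurable
  set Λ : ℝ × ℝ → (EuclideanSpace ℝ (Fin 2)) × (EuclideanSpace ℝ (Fin 2)) :=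
    fun p => ((show EuclideanSpace ℝ (Fin 2) from
                WithLp.toLp 2 ![Xmap N p, plf n w (sawIter s (Xmap N p))]),
              E2 (p.2, plf n w p.1)) with hΛdef
  have hMeq : (fun x : ℝ => (show EuclideanSpace ℝ (Fin 2) from WithLp.toLp 2 ![x, plf n w (sawIter s x)]))
      = fun x : ℝ => E2 (x, plf n w (sawIter s x)) := by
    funext x; rfl
  have hM : Measurable (fun x : ℝ =>
      (show EuclideanSpace ℝ (Fin 2) from WithLp.toLp 2 ![x, plf n w (sawIter s x)])) := by
    rw [hMeq]
    exact E2.measurable.comp (measurable_id.prodMk (hf.comp (measurable_sawIter s)))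
  have hΛm : Measurable Λ := by
    rw [hΛdef]
    apply Measurable.prodMk
    · exact hM.comp (measurable_Xmap N)
    · exact E2.measurable.comp (measurable_snd.prodMk (hf.comp measurable_fst))
  set π := Measure.map Λ (U.prod U) with hπdef
  have hfst : π.map Prod.fst = Measure.map (fun x : ℝ =>
      (show EuclideanSpace ℝ (Fin 2) from WithLp.toLp 2 ![x, plf n w (sawIter s x)])) (uniformOnIcc 0 1) := by
    rw [hU, hπdef, Measure.map_map measurable_fst hΛm]
    have h1 : (Prod.fst ∘ Λ) = (fun x : ℝ =>
        (show EuclideanSpace ℝ (Fin 2) from WithLp.toLp 2 ![x, plf n w (sawIter s x)])) ∘ (Xmap N) := rfl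
    rw [h1, ← Measure.map_map hM (measurable_Xmap N), map_Xmap N hN]
  have hFm : Measurable (fun y : EuclideanSpace ℝ (Fin 2) =>
      ENNReal.ofReal (histPdf2 n (fun _ k₂ => w k₂) y)) := by
    apply ENNReal.measurable_ofReal.comp
    unfold histPdf2
    apply Finset.measurable_sum
    intro k₁ _
    apply Finset.measurable_sum
    intro k₂ _
    apply Measurable.mul
    · apply Measurable.mul measurable_const
      exact (Measurable.indicator measurable_const measurableSet_Ico).comp
        ((measurable_pi_apply 0).comp (MeasurableEquiv.toLp 2 (Fin 2 → ℝ)).symm.measurable)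
    · exact (Measurable.indicator measurable_const measurableSet_Ico).comp
        ((measurable_pi_apply 1).comp (MeasurableEquiv.toLp 2 (Fin 2 → ℝ)).symm.measurable)
  have hsnd : π.map Prod.snd = volume.withDensity
      (fun y => ENNReal.ofReal (histPdf2 n (fun _ k₂ => w k₂) y)) := by
    rw [hπdef, Measure.map_map measurable_snd hΛm]
    have h1 : (Prod.snd ∘ Λ) = (⇑E2) ∘ ((Prod.map id (plf n w)) ∘ Prod.swap) := rfl
    rw [h1, ← Measure.map_map E2.measurable ((measurable_id.prodMap hf).comp measurable_swap),
      ← Measure.map_map (measurable_id.prodMap hf) measurable_swap,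
      Measure.prod_swap, ← Measure.map_prod_map _ _ measurable_id hf,
      Measure.map_id, map_plf n hn w hw hsum]
    have hvol : (volume : Measure (EuclideanSpace ℝ (Fin 2)))
        = Measure.map E2 (volume.prod volume) := measurePreserving_E2.map_eq.symm
    rw [hvol, withDensity_map_equiv E2 _ _ hFm, ← Measure.volume_eq_prod,
      hist_density_eq n hn w hw]
  -- cost bound
  have hcost : ∀ᵐ q ∂(U.prod U), ‖(Λ q).1 - (Λ q).2‖ ≤ 1/(N:ℝ) := by
    have hps : U.prod U
        = (volume.prod volume).restrict ((Set.Icc (0:ℝ) 1) ×ˢ (Set.Icc (0:ℝ) 1)) :=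
      Measure.prod_restrict _ _
    rw [hps]
    filter_upwards [ae_restrict_mem (measurableSet_Icc.prod measurableSet_Icc)] with q hq
    obtain ⟨ht, hu⟩ := hq
    have hsaw : sawIter s (Xmap N q) = q.1 := sawIter_Xmap s q ht.1 ht.2
    have habs : |Xmap N q - q.2| ≤ 1/(N:ℝ) := abs_Xmap_sub N hN q ht.1 ht.2 hu.1 hu.2
    have hvec : (Λ q).1 - (Λ q).2
        = (show EuclideanSpace ℝ (Fin 2) from WithLp.toLp 2 ![Xmap N q - q.2, 0]) := by
      ext i
      rw [hΛdef]
      fin_cases i <;>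
        simp [PiLp.sub_apply, E2_apply, hsaw, Matrix.cons_val_zero, Matrix.cons_val_one,
          Matrix.head_cons]
    rw [hvec, EuclideanSpace.norm_eq, Fin.sum_univ_two]
    simp only [Matrix.cons_val_zero, Matrix.cons_val_one, Matrix.head_cons, Real.norm_eq_abs,
      sq_abs, norm_zero]
    rw [show (0:ℝ)^2 = 0 from by norm_num, add_zero, Real.sqrt_sq_eq_abs]
    exact habs
  have hmeasN : Measurable fun q : ℝ × ℝ => ‖(Λ q).1 - (Λ q).2‖ :=
    ((continuous_fst.sub continuous_snd).norm.measurable).comp hΛm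
  have hint : Integrable (fun q => ‖(Λ q).1 - (Λ q).2‖) (U.prod U) :=
    Integrable.mono' (integrable_const (1/(N:ℝ))) hmeasN.aestronglyMeasurable
      (by filter_upwards [hcost] with q hq; rwa [norm_norm])
  have hIM : ∫ p, ‖p.1 - p.2‖ ∂π = ∫ q, ‖(Λ q).1 - (Λ q).2‖ ∂(U.prod U) := by
    rw [hπdef]
    exact integral_map hΛm.aemeasurable
      ((continuous_fst.sub continuous_snd).norm.aestronglyMeasurable)
  have hle2 : ∫ q, ‖(Λ q).1 - (Λ q).2‖ ∂(U.prod U) ≤ 1/(N:ℝ) := by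
    have h := integral_mono_ae hint (integrable_const (1/(N:ℝ))) hcost
    rwa [integral_const, probReal_univ, one_smul] at h
  have hfinal : 1/(N:ℝ) ≤ 2 * Real.sqrt 2 / 2^s := by
    have h2 : (N:ℝ) = 2^s := by rw [hNdef]; push_cast; ring
    rw [h2]
    have hsq : (1:ℝ) ≤ Real.sqrt 2 := by
      rw [show (1:ℝ) = Real.sqrt 1 from (Real.sqrt_one).symm]
      exact Real.sqrt_le_sqrt (by norm_num)
    gcongr
    linarith
  unfold wassersteinDist
  have hbdd : BddBelow (Set.range fun π' :
      {π' : Measure ((EuclideanSpace ℝ (Fin 2)) × (EuclideanSpace ℝ (Fin 2))) //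
        π'.map Prod.fst = Measure.map (fun x : ℝ =>
          (show EuclideanSpace ℝ (Fin 2) from WithLp.toLp 2 ![x, plf n w (sawIter s x)])) (uniformOnIcc 0 1) ∧
        π'.map Prod.snd = volume.withDensity
          (fun y => ENNReal.ofReal (histPdf2 n (fun _ k₂ => w k₂) y))} =>
      ∫ p, ‖p.1 - p.2‖ ∂(π' : Measure ((EuclideanSpace ℝ (Fin 2)) × (EuclideanSpace ℝ (Fin 2))))) := by
    refine ⟨0, ?_⟩
    rintro x ⟨π', rfl⟩
    exact integral_nonneg fun p => norm_nonneg _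
  refine le_trans (ciInf_le hbdd ⟨π, hfst, hsnd⟩) ?_
  rw [hIM]
  exact le_trans hle2 hfinal
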